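/- Let Y ⊆ ℝ^d be a nonempty closed convex set, and let φ: ℝ^d → ℝ be convex and differentiable with L-Lipschitz continuous gradient on ℝ^d. Let x ∈ ℝ^d, α > 0, and set y = Π_Y[x − α∇φ(x)], where Π_Y denotes the Euclidean projection onto Y. Then for any x̌ ∈ Y, any z ∈ ℝ^d and any τ > 0: ‖y − x̌‖² ≤ (1 + A_τ α²)‖x − x̌‖² − 2α(φ(z) − φ(x̌)) − (3/4)‖y − x‖² + (3/(8τ) + 2αL)‖x − z‖² + B_τ α² ‖∇φ(x̌)‖², where A_τ = 8L² + 16τL² and B_τ = 8τ + 8. -/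

import Mathlib

open Set
local notation "⟪" a ", " b "⟫" => @inner ℝ _ _ a b

lemma grad_ineq {E : Type*} [NormedAddCommGroup E] [InnerProductSpace ℝ E] [CompleteSpace E]
    (φ : E → ℝ) (g : E → E) (hconv : ConvexOn ℝ Set.univ φ)
    (hgrad : ∀ w, HasGradientAt φ (g w) w) (a b : E) :
    φ a + ⟪g a, b - a⟫ ≤ φ b := by
  have hline : ∀ t : ℝ, HasDerivAt (fun t : ℝ => a + t • (b - a)) (b - a) (0:ℝ) := by
    intro t
    simpa using ((hasDerivAt_id (0:ℝ)).smul_const (b - a)).const_add a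
  have hF : HasFDerivAt φ ((InnerProductSpace.toDual ℝ E) (g a)) a :=
    (hasGradientAt_iff_hasFDerivAt.mp (hgrad a))
  have hcomp : HasDerivAt (fun t : ℝ => φ (a + t • (b - a))) ⟪g a, b - a⟫ 0 := by
    have hF' : HasFDerivAt φ ((InnerProductSpace.toDual ℝ E) (g a)) (a + (0:ℝ) • (b - a)) := by
      simpa using hF
    have := hF'.comp_hasDerivAt (0:ℝ) (hline 0)
    simpa [InnerProductSpace.toDual_apply_apply, Function.comp_def] using this
  have hc : ConvexOn ℝ Set.univ (fun t : ℝ => φ (a + t • (b - a))) := by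
    have := hconv.comp_affineMap (AffineMap.lineMap a b : ℝ →ᵃ[ℝ] E)
    convert this using 2 with t
    case e'_12 =>
      simp only [Function.comp_apply, AffineMap.lineMap_apply, vsub_eq_sub, vadd_eq_add]
      abel
    all_goals rfl
  have hslope := hc.le_slope_of_hasDerivAt (mem_univ (0:ℝ)) (mem_univ (1:ℝ)) one_pos hcomp
  simp [slope_def_field] at hslope
  linarith [hslope]


set_option maxHeartbeats 1000000 in
/-- **Basic relation for one projected-gradient step** (Lemma 1 of Nedić 2011).
Let `Y ⊆ ℝ^d` be nonempty, closed and convex, let `φ` be convex and differentiable with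
`L`-Lipschitz gradient `g`, and let `y = Π_Y[x − α g(x)]`.  Then for any `xch ∈ Y`, `z ∈ ℝ^d`
and `τ > 0`,
`‖y − xch‖² ≤ (1 + A_τ α²)‖x − xch‖² − 2α(φ(z) − φ(xch)) − (3/4)‖y − x‖²
  + (3/(8τ) + 2αL)‖x − z‖² + B_τ α² ‖g(xch)‖²`,
where `A_τ = 8L² + 16τL²` and `B_τ = 8τ + 8`. -/
theorem projected_gradient_basic_relation {d : ℕ}
    (Y : Set (EuclideanSpace ℝ (Fin d)))
    (hYne : Y.Nonempty) (hYclosed : IsClosed Y) (hYconvex : Convex ℝ Y)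
    (φ : EuclideanSpace ℝ (Fin d) → ℝ)
    (g : EuclideanSpace ℝ (Fin d) → EuclideanSpace ℝ (Fin d))
    (hconv : ConvexOn ℝ Set.univ φ)
    (hgrad : ∀ w, HasGradientAt φ (g w) w)
    (L : ℝ) (hL : 0 ≤ L)
    (hLip : ∀ w w', ‖g w - g w'‖ ≤ L * ‖w - w'‖)
    (x y : EuclideanSpace ℝ (Fin d)) (α : ℝ) (hα : 0 < α)
    (hy : y ∈ Y ∧ ∀ w ∈ Y, ‖y - (x - α • g x)‖ ≤ ‖w - (x - α • g x)‖)
    (xch : EuclideanSpace ℝ (Fin d)) (hxch : xch ∈ Y)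
    (z : EuclideanSpace ℝ (Fin d)) (τ : ℝ) (hτ : 0 < τ) :
    ‖y - xch‖ ^ 2 ≤ (1 + (8 * L ^ 2 + 16 * τ * L ^ 2) * α ^ 2) * ‖x - xch‖ ^ 2
      - 2 * α * (φ z - φ xch) - (3 / 4) * ‖y - x‖ ^ 2
      + (3 / (8 * τ) + 2 * α * L) * ‖x - z‖ ^ 2
      + (8 * τ + 8) * α ^ 2 * ‖g xch‖ ^ 2 := by
  obtain ⟨hyY, hymin⟩ := hy
  set p := x - α • g x with hp
  -- projection characterization
  haveI : Nonempty ↑Y := ⟨⟨y, hyY⟩⟩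
  have hinf : ‖p - y‖ = ⨅ w : Y, ‖p - w‖ := by
    apply le_antisymm
    · refine le_ciInf fun w => ?_
      rw [norm_sub_rev p y, norm_sub_rev p (w : EuclideanSpace ℝ (Fin d))]
      exact hymin w w.2
    · exact ciInf_le ⟨0, by rintro _ ⟨w, rfl⟩; exact norm_nonneg _⟩ (⟨y, hyY⟩ : Y)
  have hproj : ⟪p - y, xch - y⟫ ≤ 0 :=
    ((norm_eq_iInf_iff_real_inner_le_zero hYconvex hyY).mp hinf) xch hxch
  -- basic projection inequality
  have key1 : ‖y - xch‖^2 ≤ ‖x - xch‖^2 - ‖y - x‖^2 - 2*α*⟪g x, y - xch⟫ := by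
    have hid : ‖y - xch‖^2 - (‖x - xch‖^2 - ‖y - x‖^2 - 2*α*⟪g x, y - xch⟫)
        = 2*⟪p - y, xch - y⟫ := by
      simp only [hp, ← real_inner_self_eq_norm_sq, inner_sub_left, inner_sub_right,
        real_inner_smul_left, real_inner_smul_right]
      rw [real_inner_comm y x, real_inner_comm xch y, real_inner_comm xch x,
        real_inner_comm y (g x), real_inner_comm xch (g x)]
      ring
    linarith
  -- gradient inequality
  have hgi : φ z + ⟪g z, xch - z⟫ ≤ φ xch := grad_ineq φ g hconv hgrad z xch
  -- decomposition of the inner product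
  have decomp : ⟪g x, y - xch⟫
      = ⟪g x, y - x⟫ + ⟪g x, x - z⟫ + ⟪g x - g z, z - xch⟫ + ⟪g z, z - xch⟫ := by
    simp only [inner_sub_left, inner_sub_right]; ring
  have decomp' : True := trivial
  set I1 := ⟪g x, y - x⟫ with hI1
  set I2 := ⟪g x, x - z⟫ with hI2
  set I3 := ⟪g x - g z, z - xch⟫ with hI3
  set I4 := ⟪g z, z - xch⟫ with hI4
  set A := ‖y - x‖ with hA
  set B := ‖x - xch‖ with hB
  set C := ‖x - z‖ with hC
  set G := ‖g x‖ with hG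
  set Gc := ‖g xch‖ with hGc
  have hA0 : 0 ≤ A := norm_nonneg _
  have hB0 : 0 ≤ B := norm_nonneg _
  have hC0 : 0 ≤ C := norm_nonneg _
  have hG0 : 0 ≤ G := norm_nonneg _
  have hGc0 : 0 ≤ Gc := norm_nonneg _
  -- Cauchy-Schwarz bounds
  have i1 : -(G*A) ≤ I1 := (abs_le.mp (abs_real_inner_le_norm _ _)).1
  have i2 : -(G*C) ≤ I2 := (abs_le.mp (abs_real_inner_le_norm _ _)).1
  have i3' : -(‖g x - g z‖ * ‖z - xch‖) ≤ I3 :=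
    (abs_le.mp (abs_real_inner_le_norm _ _)).1
  have htri : ‖z - xch‖ ≤ C + B := by
    have h1 : ‖z - xch‖ ≤ ‖z - x‖ + ‖x - xch‖ := norm_sub_le_norm_sub_add_norm_sub z x xch
    rw [norm_sub_rev z x] at h1
    simpa [hC, hB] using h1
  have hLipxz : ‖g x - g z‖ ≤ L * C := hLip x z
  have i3 : -(L*C*(C+B)) ≤ I3 := by
    have hm : ‖g x - g z‖ * ‖z - xch‖ ≤ (L*C)*(C+B) :=
      mul_le_mul hLipxz htri (norm_nonneg _) (by positivity)
    nlinarith [i3']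
  have i4 : φ z - φ xch ≤ I4 := by
    have : ⟪g z, xch - z⟫ = -I4 := by
      rw [← neg_sub, inner_neg_right]
    linarith [hgi, this ▸ hgi]
  have hgx : G ≤ Gc + L*B := by
    have h1 : ‖g x‖ ≤ ‖g x - g xch‖ + ‖g xch‖ := by
      calc ‖g x‖ = ‖(g x - g xch) + g xch‖ := by rw [sub_add_cancel]
        _ ≤ ‖g x - g xch‖ + ‖g xch‖ := norm_add_le _ _
    have h2 := hLip x xch
    simp only [← hB, ← hG, ← hGc] at h1 h2 ⊢
    linarith
  clear_value I1 I2 I3 I4 A B C G Gc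
  clear hI1 hI2 hI3 hI4 hA hB hC hG hGc hproj hinf hymin hgi decomp' i3' htri hLipxz hgrad hconv hLip hyY hxch hYne hYclosed hYconvex hp
  have stepG : G^2 ≤ 2*Gc^2 + 2*L^2*B^2 := by
    nlinarith [sq_nonneg (Gc - L*B), mul_nonneg hL hB0]
  have eG : α^2*G^2 ≤ α^2*(2*Gc^2 + 2*L^2*B^2) := by
    nlinarith [mul_nonneg (sq_nonneg α) (sub_nonneg.mpr stepG)]
  have eGt : τ*(α^2*G^2) ≤ τ*(α^2*(2*Gc^2 + 2*L^2*B^2)) := by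
    nlinarith [mul_nonneg hτ.le (sub_nonneg.mpr eG)]
  have step1 : 2*α*(G*A) ≤ A^2/4 + 4*α^2*G^2 := by
    nlinarith [sq_nonneg (A/2 - 2*α*G)]
  have step2 : 2*α*(G*C) ≤ C^2/(4*τ) + 4*τ*α^2*G^2 := by
    have h2 : (2*α*(G*C) - 4*τ*α^2*G^2) * (4*τ) ≤ C^2 := by
      nlinarith [sq_nonneg (C - 4*τ*α*G)]
    have := (le_div_iff₀ (by positivity : (0:ℝ) < 4*τ)).mpr h2
    linarith
  have step3 : 2*α*L*(C*B) ≤ C^2/(8*τ) + 8*τ*α^2*L^2*B^2 := by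
    have h3 : (2*α*L*(C*B) - 8*τ*α^2*L^2*B^2) * (8*τ) ≤ C^2 := by
      nlinarith [sq_nonneg (C - 8*τ*α*L*B)]
    have := (le_div_iff₀ (by positivity : (0:ℝ) < 8*τ)).mpr h3
    linarith
  -- multiply inner-product bounds by 2α
  have e1 : -(2*α)*I1 ≤ 2*α*(G*A) := by
    nlinarith [mul_nonneg hα.le (show (0:ℝ) ≤ I1 + G*A by linarith)]
  have e2 : -(2*α)*I2 ≤ 2*α*(G*C) := by
    nlinarith [mul_nonneg hα.le (show (0:ℝ) ≤ I2 + G*C by linarith)]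
  have e3 : -(2*α)*I3 ≤ 2*α*L*(C*B) + 2*α*L*C^2 := by
    nlinarith [mul_nonneg hα.le
      (show (0:ℝ) ≤ I3 + L*C*(C+B) by linarith)]
  have e4 : -(2*α)*I4 ≤ -(2*α)*(φ z - φ xch) := by
    nlinarith [mul_nonneg hα.le (show (0:ℝ) ≤ I4 - (φ z - φ xch) by linarith)]
  have key2 : ‖y - xch‖^2 ≤ B^2 - A^2
      + (-(2*α)*I1 + -(2*α)*I2
        + -(2*α)*I3 + -(2*α)*I4) := by
    rw [decomp] at key1; linarith
  have hdiv : (3/(8*τ))*C^2 = C^2/(4*τ) + C^2/(8*τ) := by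
    field_simp; ring
  have hC2 : C^2/(4*τ) = (1/(4*τ))*C^2 := by ring
  have hC3 : C^2/(8*τ) = (1/(8*τ))*C^2 := by ring
  linarith [key2, e1, e2, e3, e4, step1, step2, step3, eG, eGt, hdiv]
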